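/- Let ν ∈ ℝ^{n+1} be a unit vector with ν_{n+1} > sin θ / 2 for some θ ∈ (0,π). Let u be the gradient vector Du = (-ν₁/ν_{n+1}, …, -νₙ/ν_{n+1}) ∈ ℝⁿ. Then |Du + cot θ · e₁|² ≤ (4/sin²θ)(3 + 2cot²θ) · |ν - ν_θ|², where ν_θ = (cos θ, 0,…,0, sin θ). -/

import Mathlib

open Real

lemma aux0 (s c m x : ℝ) (hs : 0 < s) (hm : s / 2 < m) (hcs : c ^ 2 + s ^ 2 = 1) :
    (-x / m + c / s) ^ 2 ≤
      (4 / s ^ 2) * (3 + 2 * (c / s) ^ 2) * (x - c) ^ 2 +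
        (4 / s ^ 2) * (3 + 2 * (c / s) ^ 2) * (m - s) ^ 2 := by
  have hm0 : 0 < m := lt_trans (by positivity) hm
  have h1 : (-x / m + c / s) ^ 2 = (c * m - s * x) ^ 2 / (s * m) ^ 2 := by
    field_simp; ring
  have h2 : (c * m - s * x) ^ 2 ≤ (x - c) ^ 2 + (m - s) ^ 2 := by
    nlinarith [sq_nonneg (c * (x - c) + s * (m - s))]
  have hsm : s ^ 4 / 4 ≤ (s * m) ^ 2 := by
    have h := mul_pos (pow_pos hs 2) (mul_pos (by linarith : (0:ℝ) < m - s / 2)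
      (by linarith : (0:ℝ) < m + s / 2))
    nlinarith [h]
  have h4 : (c * m - s * x) ^ 2 / (s * m) ^ 2 ≤ ((x - c) ^ 2 + (m - s) ^ 2) / (s ^ 4 / 4) :=
    div_le_div₀ (by positivity) h2 (by positivity) hsm
  have h5 : ((x - c) ^ 2 + (m - s) ^ 2) / (s ^ 4 / 4)
      = 4 / s ^ 4 * ((x - c) ^ 2 + (m - s) ^ 2) := by
    field_simp
  have hK : (4 / s ^ 2) * (3 + 2 * (c / s) ^ 2) = 4 * (2 + s ^ 2) / s ^ 4 := by
    have hc2 : c ^ 2 = 1 - s ^ 2 := by linarith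
    field_simp [hc2]; linear_combination 2 * hc2
  have hcoef : 4 / s ^ 4 ≤ 4 * (2 + s ^ 2) / s ^ 4 := by
    gcongr
    nlinarith [sq_nonneg s]
  have h6 : 4 / s ^ 4 * ((x - c) ^ 2 + (m - s) ^ 2)
      ≤ 4 * (2 + s ^ 2) / s ^ 4 * ((x - c) ^ 2 + (m - s) ^ 2) :=
    mul_le_mul_of_nonneg_right hcoef (by positivity)
  calc (-x / m + c / s) ^ 2 = (c * m - s * x) ^ 2 / (s * m) ^ 2 := h1
    _ ≤ ((x - c) ^ 2 + (m - s) ^ 2) / (s ^ 4 / 4) := h4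
    _ = 4 / s ^ 4 * ((x - c) ^ 2 + (m - s) ^ 2) := h5
    _ ≤ 4 * (2 + s ^ 2) / s ^ 4 * ((x - c) ^ 2 + (m - s) ^ 2) := h6
    _ = (4 / s ^ 2) * (3 + 2 * (c / s) ^ 2) * (x - c) ^ 2 +
        (4 / s ^ 2) * (3 + 2 * (c / s) ^ 2) * (m - s) ^ 2 := by rw [hK]; ring

lemma aux1 (s c m x : ℝ) (hs : 0 < s) (hm : s / 2 < m) :
    (-x / m) ^ 2 ≤ (4 / s ^ 2) * (3 + 2 * (c / s) ^ 2) * x ^ 2 := by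
  have hm0 : 0 < m := lt_trans (by positivity) hm
  have h1 : (-x / m) ^ 2 = x ^ 2 / m ^ 2 := by rw [div_pow]; ring_nf
  have hsm : s ^ 2 / 4 ≤ m ^ 2 := by nlinarith
  have h2 : x ^ 2 / m ^ 2 ≤ x ^ 2 / (s ^ 2 / 4) :=
    div_le_div₀ (by positivity) le_rfl (by positivity) hsm
  have h3 : x ^ 2 / (s ^ 2 / 4) = 4 / s ^ 2 * x ^ 2 := by field_simp
  have hA : (0:ℝ) ≤ 4 / s ^ 2 := by positivity
  have h4 : 4 / s ^ 2 * x ^ 2 ≤ (4 / s ^ 2) * (3 + 2 * (c / s) ^ 2) * x ^ 2 := by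
    nlinarith [mul_nonneg hA (sq_nonneg x),
      mul_nonneg (mul_nonneg hA (sq_nonneg (c / s))) (sq_nonneg x)]
  linarith [h1.le, h2, h3.le, h4]

theorem stmt_11 (n : ℕ) (hn : 2 ≤ n) (θ : ℝ) (hθ : θ ∈ Set.Ioo 0 Real.pi)
    (ν : EuclideanSpace ℝ (Fin (n + 1))) (hν : ‖ν‖ = 1)
    (hlast : Real.sin θ / 2 < ν (Fin.last n))
    (Du : Fin n → ℝ) (hDu : ∀ i, Du i = -ν (Fin.castSucc i) / ν (Fin.last n)) :
    ∑ i, (Du i + (Real.cos θ / Real.sin θ) * (if (i : ℕ) = 0 then 1 else 0)) ^ 2 ≤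
      (4 / Real.sin θ ^ 2) * (3 + 2 * (Real.cos θ / Real.sin θ) ^ 2) *
        ‖ν - (EuclideanSpace.single 0 (Real.cos θ) +
          EuclideanSpace.single (Fin.last n) (Real.sin θ))‖ ^ 2 := by
  obtain ⟨hθ1, hθ2⟩ := hθ
  have hs : 0 < Real.sin θ := Real.sin_pos_of_pos_of_lt_pi hθ1 hθ2
  set s := Real.sin θ with hsdef
  set c := Real.cos θ with hcdef
  have hcs : c ^ 2 + s ^ 2 = 1 := by
    rw [hsdef, hcdef, add_comm]; exact Real.sin_sq_add_cos_sq θ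
  set m := ν (Fin.last n) with hmdef
  haveI : NeZero n := ⟨by omega⟩
  have hlast0 : (Fin.last n : Fin (n + 1)) ≠ 0 := by
    simp [Fin.ext_iff]; omega
  set K := (4 / s ^ 2) * (3 + 2 * (c / s) ^ 2) with hKdef
  -- norm squared as a coordinate sum
  have hnorm : ‖ν - (EuclideanSpace.single 0 c + EuclideanSpace.single (Fin.last n) s)‖ ^ 2
      = ∑ j, (ν j - ((if j = 0 then c else 0) + (if j = Fin.last n then s else 0))) ^ 2 := by
    rw [EuclideanSpace.norm_eq, Real.sq_sqrt (by positivity)]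
    refine Finset.sum_congr rfl fun j _ => ?_
    simp [EuclideanSpace.single_apply, Real.norm_eq_abs, sq_abs]
  rw [hnorm, Fin.sum_univ_castSucc]
  have hcast : ∀ i : Fin n,
      (ν (Fin.castSucc i) -
        ((if (Fin.castSucc i : Fin (n+1)) = 0 then c else 0) +
          (if (Fin.castSucc i : Fin (n+1)) = Fin.last n then s else 0)))
      = ν (Fin.castSucc i) - (if i = 0 then c else 0) := by
    intro i
    have h1 : (Fin.castSucc i : Fin (n+1)) ≠ Fin.last n := (Fin.castSucc_lt_last i).ne
    have h2 : ((Fin.castSucc i : Fin (n+1)) = 0) ↔ (i = 0) := by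
      exact Fin.castSucc_eq_zero_iff
    simp [h1, h2]
  have hlastterm : (ν (Fin.last n) -
      ((if (Fin.last n : Fin (n+1)) = 0 then c else 0) +
        (if (Fin.last n : Fin (n+1)) = Fin.last n then s else 0))) = m - s := by
    simp [hlast0, hmdef]
  have key : ∀ i : Fin n,
      (Du i + c / s * (if (i : ℕ) = 0 then 1 else 0)) ^ 2 ≤
        K * (ν (Fin.castSucc i) - (if i = 0 then c else 0)) ^ 2 +
          (if i = 0 then K * (m - s) ^ 2 else 0) := by
    intro i
    rw [hDu i]
    by_cases h0 : i = 0
    · subst h0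
      simp only [Fin.val_zero, if_pos rfl, ite_true, mul_one, hKdef]
      exact aux0 s c m (ν (Fin.castSucc 0)) hs hlast hcs
    · have : (i : ℕ) ≠ 0 := fun h => h0 (Fin.ext (by simpa using h))
      simp only [if_neg h0, if_neg this, mul_zero, add_zero, sub_zero, hKdef]
      exact aux1 s c m (ν (Fin.castSucc i)) hs hlast
  calc ∑ i, (Du i + c / s * (if (i : ℕ) = 0 then 1 else 0)) ^ 2
      ≤ ∑ i : Fin n, (K * (ν (Fin.castSucc i) - (if i = 0 then c else 0)) ^ 2 +
          (if i = 0 then K * (m - s) ^ 2 else 0)) :=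
        Finset.sum_le_sum fun i _ => key i
    _ = K * (∑ i : Fin n, (ν (Fin.castSucc i) - (if i = 0 then c else 0)) ^ 2) +
          K * (m - s) ^ 2 := by
        rw [Finset.sum_add_distrib, ← Finset.mul_sum]
        congr 1
        simp
    _ = K * ((∑ i : Fin n,
          (ν (Fin.castSucc i) -
            ((if (Fin.castSucc i : Fin (n+1)) = 0 then c else 0) +
              (if (Fin.castSucc i : Fin (n+1)) = Fin.last n then s else 0))) ^ 2) +
          (ν (Fin.last n) -
            ((if (Fin.last n : Fin (n+1)) = 0 then c else 0) +
              (if (Fin.last n : Fin (n+1)) = Fin.last n then s else 0))) ^ 2) := by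
        simp only [hcast, if_neg hlast0, if_true, zero_add, ← hmdef]
        ring
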